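/- Let q : (0,∞) → ℝ be measurable with p_*·1_{{s>s_*}} ≤ q(s) ≤ p_∞ for constants p_*, p_∞, s_* > 0, let n₀ ∈ L¹(0,∞) be nonnegative with g := ∫₀^∞ n₀(s) ds, and let n : [0,∞) → L¹(0,∞) be the mild solution of the linear renewal equation with rate q and initial datum n₀. Then n(2s_*, s) ≥ p_*·e^{−2p_∞ s_*}·g for a.e. s ∈ (0, s_*). Consequently, the associated stochastic semigroup on L¹(0,∞) satisfies Doeblin's condition with t₀ = 2s_*, α = p_*·s_*·e^{−2p_∞ s_*} and ν = (1/s_*)·1_{{[0,s_*]}}. -/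

import Mathlib

open MeasureTheory Set Real Filter

/-- Mild solution of the linear renewal equation
`∂ₜn + ∂ₛn + q(s) n = 0`, `n(t,0) = N(t) = ∫₀^∞ q(u) n(t,u) du`, with initial datum `n₀`,
viewed as a continuous bounded map `[0,∞) → L¹(0,∞)`. -/
def IsRenewalMild (q : ℝ → ℝ) (n₀ : ℝ → ℝ) (n : ℝ → ℝ → ℝ) : Prop :=
  (∀ t ≥ (0:ℝ), IntegrableOn (n t) (Ioi 0)) ∧
  (∃ C : ℝ, ∀ t ≥ (0:ℝ), (∫ s in Ioi (0:ℝ), |n t s|) ≤ C) ∧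
  (∀ t₀ ≥ (0:ℝ), Tendsto (fun t => ∫ s in Ioi (0:ℝ), |n t s - n t₀ s|)
    (nhdsWithin t₀ (Ici 0)) (nhds 0)) ∧
  ((n 0) =ᵐ[volume.restrict (Ioi 0)] n₀) ∧
  (∀ t > (0:ℝ),
    (∀ᵐ s ∂(volume.restrict (Ioi t)),
      n t s = n₀ (s - t) * Real.exp (-(∫ τ in (0:ℝ)..t, q (τ + s - t)))) ∧
    (∀ᵐ s ∂(volume.restrict (Ioo 0 t)),
      n t s = (∫ u in Ioi (0:ℝ), q u * n (t - s) u) * Real.exp (-(∫ τ in (0:ℝ)..s, q τ))))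

lemma bddIntegrableOn {q : ℝ → ℝ} {C : ℝ} (hm : Measurable q) (hb : ∀ s, |q s| ≤ C)
    {s : Set ℝ} (hs : volume s ≠ ⊤) : IntegrableOn q s volume :=
  Integrable.mono' (integrableOn_const hs)
    hm.aestronglyMeasurable.restrict (Filter.Eventually.of_forall hb)

lemma bddIntervalIntegrable {q : ℝ → ℝ} {C : ℝ} (hm : Measurable q) (hb : ∀ s, |q s| ≤ C)
    (a b : ℝ) : IntervalIntegrable q volume a b := by
  rw [intervalIntegrable_iff]
  exact Integrable.mono' (integrableOn_const measure_Ioc_lt_top.ne)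
    hm.aestronglyMeasurable.restrict (Filter.Eventually.of_forall hb)

lemma renewal_nonneg
    (q : ℝ → ℝ) (pinf : ℝ) (hpinf : 0 < pinf)
    (hq_meas : Measurable q) (hq_nonneg : ∀ s, 0 ≤ q s) (hq_upper : ∀ s, q s ≤ pinf)
    (n₀ : ℝ → ℝ)
    (hn₀_nonneg : ∀ᵐ s ∂(volume.restrict (Ioi (0:ℝ))), 0 ≤ n₀ s)
    (n : ℝ → ℝ → ℝ) (hn : IsRenewalMild q n₀ n) :
    ∀ t ≥ (0:ℝ), ∀ᵐ s ∂(volume.restrict (Ioi (0:ℝ))), 0 ≤ n t s := by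
  obtain ⟨hint, -, hcont, hinit, hrep⟩ := hn
  have hq_abs : ∀ s, |q s| ≤ pinf := fun s => abs_le.mpr ⟨by linarith [hq_nonneg s], hq_upper s⟩
  set m : ℝ → ℝ → ℝ := fun t s => max (-(n t s)) 0 with hm_def
  set f : ℝ → ℝ := fun t => ∫ s in Ioi (0:ℝ), m t s with hf_def
  have hm_nonneg : ∀ t s, 0 ≤ m t s := fun t s => le_max_right _ _
  have hm_le_abs : ∀ t s, m t s ≤ |n t s| :=
    fun t s => max_le (neg_le_abs _) (abs_nonneg _)
  have hm_lip : ∀ t t' s, |m t s - m t' s| ≤ |n t s - n t' s| := by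
    intro t t' s
    calc |m t s - m t' s| ≤ |(-(n t s)) - (-(n t' s))| := abs_max_sub_max_le_abs _ _ _
      _ = |n t s - n t' s| := by rw [neg_sub_neg, abs_sub_comm]
  have hm_int : ∀ t, 0 ≤ t → IntegrableOn (m t) (Ioi 0) volume := by
    intro t ht
    exact Integrable.mono' ((hint t ht).abs) ((hint t ht).aestronglyMeasurable.neg.sup
      aestronglyMeasurable_const) (Filter.Eventually.of_forall fun s => by
        simpa [abs_of_nonneg (hm_nonneg t s)] using hm_le_abs t s)
  have hf_nonneg : ∀ t, 0 ≤ f t := fun t =>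
    integral_nonneg fun s => hm_nonneg t s
  -- f 0 = 0
  have hf0 : f 0 = 0 := by
    have : ∀ᵐ s ∂(volume.restrict (Ioi (0:ℝ))), m 0 s = 0 := by
      filter_upwards [hinit, hn₀_nonneg] with s h1 h2
      have : 0 ≤ n 0 s := h1 ▸ h2
      simp [hm_def, max_eq_right, neg_nonpos.mpr this]
    exact integral_eq_zero_of_ae this
  -- continuity of f on [0, T]
  have hf_cont : ∀ T, 0 < T → ContinuousOn f (Icc 0 T) := by
    intro T hT t ht
    have htend := hcont t ht.1
    rw [ContinuousWithinAt, tendsto_iff_dist_tendsto_zero]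
    have hbound : ∀ t' ∈ Ici (0:ℝ), dist (f t') (f t) ≤ ∫ s in Ioi (0:ℝ), |n t' s - n t s| := by
      intro t' ht'
      rw [Real.dist_eq, hf_def]
      have h1 : IntegrableOn (m t') (Ioi 0) volume := hm_int t' ht'
      have h2 : IntegrableOn (m t) (Ioi 0) volume := hm_int t ht.1
      calc |(∫ s in Ioi (0:ℝ), m t' s) - ∫ s in Ioi (0:ℝ), m t s|
          = |∫ s in Ioi (0:ℝ), (m t' s - m t s)| := by rw [integral_sub h1 h2]
        _ ≤ ∫ s in Ioi (0:ℝ), |m t' s - m t s| := by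
            simpa [Real.norm_eq_abs] using
              norm_integral_le_integral_norm (fun s => m t' s - m t s) (μ := volume.restrict (Ioi 0))
        _ ≤ ∫ s in Ioi (0:ℝ), |n t' s - n t s| := by
            apply integral_mono (h1.sub h2).abs ((hint t' ht').sub (hint t ht.1)).abs
            intro s; exact hm_lip t' t s
    have hsq : Tendsto (fun t' => dist (f t') (f t)) (nhdsWithin t (Icc 0 T)) (nhds 0) := by
      apply squeeze_zero' (Filter.Eventually.of_forall fun t' => dist_nonneg)
      · exact eventually_nhdsWithin_of_forall fun t' ht' => hbound t' ht'.1
      · exact htend.mono_left (nhdsWithin_mono t fun x hx => hx.1)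
    exact hsq
  -- key integral inequality f t ≤ pinf ∫₀ᵗ f
  have hkey : ∀ t, 0 < t → f t ≤ pinf * ∫ τ in (0:ℝ)..t, f τ := by
    intro t ht
    obtain ⟨hrep1, hrep2⟩ := hrep t ht
    have h₀' : ∀ᵐ s ∂(volume : Measure ℝ), (s - t) ∈ Ioi (0:ℝ) → 0 ≤ n₀ (s - t) :=
      ((measurePreserving_sub_right volume t).quasiMeasurePreserving).ae
        ((ae_restrict_iff' measurableSet_Ioi).mp hn₀_nonneg)
    have hmt : ∀ᵐ s ∂(volume.restrict (Ioi t)), m t s = 0 := by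
      filter_upwards [hrep1, ae_restrict_of_ae h₀', ae_restrict_mem measurableSet_Ioi]
        with s h1 h2 h3
      have hnn : 0 ≤ n t s := by
        rw [h1]
        exact mul_nonneg (h2 (mem_Ioi.mpr (sub_pos.mpr (mem_Ioi.mp h3)))) (Real.exp_nonneg _)
      simp [hm_def, max_eq_right, neg_nonpos.mpr hnn]
    have hNbound : ∀ τ, 0 ≤ τ → max (-(∫ u in Ioi (0:ℝ), q u * n τ u)) 0 ≤ pinf * f τ := by
      intro τ hτ
      have hqn_int : IntegrableOn (fun u => q u * n τ u) (Ioi 0) volume :=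
        Integrable.bdd_mul (hint τ hτ) hq_meas.aestronglyMeasurable.restrict
          (c := pinf) (Filter.Eventually.of_forall fun u => by simpa [Real.norm_eq_abs] using hq_abs u)
      have hqm_int : IntegrableOn (fun u => q u * m τ u) (Ioi 0) volume :=
        Integrable.bdd_mul (hm_int τ hτ) hq_meas.aestronglyMeasurable.restrict
          (c := pinf) (Filter.Eventually.of_forall fun u => by simpa [Real.norm_eq_abs] using hq_abs u)
      apply max_le _ (mul_nonneg hpinf.le (hf_nonneg τ))
      calc -(∫ u in Ioi (0:ℝ), q u * n τ u) = ∫ u in Ioi (0:ℝ), -(q u * n τ u) := by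
            rw [integral_neg]
        _ ≤ ∫ u in Ioi (0:ℝ), q u * m τ u := by
            apply integral_mono hqn_int.neg hqm_int
            intro u
            simp only [Pi.neg_apply]
            calc -(q u * n τ u) = q u * (-(n τ u)) := by ring
              _ ≤ q u * m τ u := mul_le_mul_of_nonneg_left (le_max_left _ _) (hq_nonneg u)
        _ ≤ ∫ u in Ioi (0:ℝ), pinf * m τ u := by
            apply integral_mono hqm_int ((hm_int τ hτ).const_mul pinf)
            intro u
            exact mul_le_mul_of_nonneg_right (hq_upper u) (hm_nonneg τ u)
        _ = pinf * f τ := integral_const_mul _ _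
    have hmono : IntegrableOn (m t) (Ioi 0) volume := hm_int t ht.le
    have hsplit : (∫ s in Ioi (0:ℝ), m t s) = (∫ s in Ioc (0:ℝ) t, m t s) + ∫ s in Ioi t, m t s := by
      have hunion : Ioi (0:ℝ) = Ioc 0 t ∪ Ioi t := (Ioc_union_Ioi_eq_Ioi ht.le).symm
      rw [hunion, setIntegral_union (Ioc_disjoint_Ioi le_rfl) measurableSet_Ioi
        (hmono.mono_set Ioc_subset_Ioi_self) (hmono.mono_set (Ioi_subset_Ioi ht.le))]
    have hIoi0 : (∫ s in Ioi t, m t s) = 0 := integral_eq_zero_of_ae hmt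
    have hcomp : ContinuousOn (fun s => pinf * f (t - s)) (Icc 0 t) := by
      apply continuousOn_const.mul
      apply (hf_cont t ht).comp (continuous_const.sub continuous_id).continuousOn
      intro s hs
      exact ⟨sub_nonneg.mpr hs.2, by show t - s ≤ t; linarith [hs.1]⟩
    have hint2 : IntegrableOn (fun s => pinf * f (t - s)) (Ioo 0 t) volume :=
      (hcomp.integrableOn_Icc).mono_set Ioo_subset_Icc_self
    have h2 : (∫ s in Ioo (0:ℝ) t, m t s) ≤ ∫ s in Ioo (0:ℝ) t, pinf * f (t - s) := by
      apply setIntegral_mono_ae_restrict (hmono.mono_set (fun x hx => hx.1)) hint2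
      filter_upwards [hrep2, ae_restrict_mem measurableSet_Ioo] with s hs hmem
      have hE1 : Real.exp (-(∫ τ in (0:ℝ)..s, q τ)) ≤ 1 := by
        rw [Real.exp_le_one_iff, neg_nonpos]
        exact intervalIntegral.integral_nonneg hmem.1.le fun u _ => hq_nonneg u
      have hEnn : 0 ≤ Real.exp (-(∫ τ in (0:ℝ)..s, q τ)) := Real.exp_nonneg _
      calc m t s = max (-((∫ u in Ioi (0:ℝ), q u * n (t - s) u) *
              Real.exp (-(∫ τ in (0:ℝ)..s, q τ)))) 0 := by rw [hm_def]; simp only; rw [hs]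
        _ = max (-(∫ u in Ioi (0:ℝ), q u * n (t - s) u)) 0 *
              Real.exp (-(∫ τ in (0:ℝ)..s, q τ)) := by
            rw [max_mul_of_nonneg _ _ hEnn, zero_mul, neg_mul]
        _ ≤ max (-(∫ u in Ioi (0:ℝ), q u * n (t - s) u)) 0 :=
            mul_le_of_le_one_right (le_max_right _ _) hE1
        _ ≤ pinf * f (t - s) := hNbound (t - s) (by linarith [hmem.2])
    have h3 : (∫ s in Ioo (0:ℝ) t, pinf * f (t - s)) = pinf * ∫ τ in (0:ℝ)..t, f τ := by
      rw [← integral_Ioc_eq_integral_Ioo, ← intervalIntegral.integral_of_le ht.le,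
        intervalIntegral.integral_const_mul]
      congr 1
      have := intervalIntegral.integral_comp_sub_left (a := (0:ℝ)) (b := t) f t
      simpa using this
    calc f t = (∫ s in Ioc (0:ℝ) t, m t s) + ∫ s in Ioi t, m t s := hsplit
      _ = ∫ s in Ioo (0:ℝ) t, m t s := by rw [hIoi0, add_zero, integral_Ioc_eq_integral_Ioo]
      _ ≤ ∫ s in Ioo (0:ℝ) t, pinf * f (t - s) := h2
      _ = pinf * ∫ τ in (0:ℝ)..t, f τ := h3
  -- Gronwall: f vanishes on [0, ∞)
  have hfzero : ∀ t, 0 ≤ t → f t = 0 := by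
    intro b hb0
    rcases eq_or_lt_of_le hb0 with rfl | hb
    · exact hf0
    · set F : ℝ → ℝ := fun x => ∫ τ in (0:ℝ)..x, f τ with hF_def
      have hfI : IntegrableOn f (Icc 0 b) volume := (hf_cont b hb).integrableOn_Icc
      have hFcont : ContinuousOn F (Icc 0 b) := by
        have := intervalIntegral.continuousOn_primitive_interval (μ := volume) (a := (0:ℝ))
          (b := b) (f := f) (by rwa [uIcc_of_le hb.le])
        rwa [uIcc_of_le hb.le] at this
      have hF' : ∀ x ∈ Ico (0:ℝ) b, HasDerivWithinAt F (f x) (Ici x) x := by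
        intro x hx
        have hIcc : Icc (0:ℝ) b ∈ nhdsWithin x (Ioi x) := by
          apply mem_nhdsWithin.mpr ⟨Iio b, isOpen_Iio, hx.2, ?_⟩
          rintro y ⟨hy1, hy2⟩
          exact ⟨le_trans hx.1 (le_of_lt hy2), le_of_lt hy1⟩
        apply intervalIntegral.integral_hasDerivWithinAt_right
        · rw [intervalIntegrable_iff, uIoc_of_le hx.1]
          exact hfI.mono_set (fun y hy => ⟨hy.1.le, le_trans hy.2 hx.2.le⟩)
        · exact ⟨Icc 0 b, hIcc, (hf_cont b hb).aestronglyMeasurable measurableSet_Icc⟩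
        · exact ((hf_cont b hb) x ⟨hx.1, hx.2.le⟩).mono_of_mem_nhdsWithin hIcc
      have hbound : ∀ x ∈ Ico (0:ℝ) b, ‖f x‖ ≤ pinf * ‖F x‖ + 0 := by
        intro x hx
        have hFx : 0 ≤ F x := intervalIntegral.integral_nonneg hx.1 fun u _ => hf_nonneg u
        rw [Real.norm_eq_abs, Real.norm_eq_abs, abs_of_nonneg (hf_nonneg x),
          abs_of_nonneg hFx, add_zero]
        rcases eq_or_lt_of_le hx.1 with rfl | hx0
        · rw [hf0]
          exact mul_nonneg hpinf.le hFx
        · exact hkey x hx0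
      have hgron := norm_le_gronwallBound_of_norm_deriv_right_le (δ := 0) (K := pinf)
        (ε := 0) hFcont hF' (by simp [hF_def]) hbound
      have hFb : F b = 0 := by
        have := hgron b (right_mem_Icc.mpr hb.le)
        rw [gronwallBound_ε0_δ0] at this
        exact norm_le_zero_iff.mp this
      have : f b ≤ 0 := by
        have h := hkey b hb
        have hFb' : (∫ τ in (0:ℝ)..b, f τ) = 0 := hFb
        rw [hFb', mul_zero] at h
        exact h
      exact le_antisymm this (hf_nonneg b)
  intro t ht
  have hzero := hfzero t ht
  have hae : (fun s => m t s) =ᵐ[volume.restrict (Ioi 0)] 0 :=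
    (integral_eq_zero_iff_of_nonneg_ae (Filter.Eventually.of_forall fun s => hm_nonneg t s)
      (hm_int t ht)).mp hzero
  filter_upwards [hae] with s hs
  have h1 : max (-(n t s)) 0 = 0 := hs
  have h2 := le_max_left (-(n t s)) 0
  rw [h1] at h2
  linarith

/-- Doeblin lower bound for the renewal semigroup: at time `t₀ = 2s_*` the solution
dominates `p_* e^{-2p_∞ s_*} g` on `(0, s_*)`; hence Doeblin's condition holds with
`α = p_* s_* e^{-2 p_∞ s_*}` and `ν = (1/s_*) 1_{[0,s_*]}`. -/
theorem statement12
    (q : ℝ → ℝ) (pstar pinf sstar : ℝ)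
    (hpstar : 0 < pstar) (hpinf : 0 < pinf) (hsstar : 0 < sstar)
    (hq_meas : Measurable q)
    (hq_nonneg : ∀ s : ℝ, 0 ≤ q s)
    (hq_lower : ∀ s : ℝ, sstar < s → pstar ≤ q s)
    (hq_upper : ∀ s : ℝ, q s ≤ pinf)
    (n₀ : ℝ → ℝ) (hn₀_int : IntegrableOn n₀ (Ioi 0))
    (hn₀_nonneg : ∀ᵐ s ∂(volume.restrict (Ioi (0:ℝ))), 0 ≤ n₀ s)
    (g : ℝ) (hg : g = ∫ s in Ioi (0:ℝ), n₀ s)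
    (n : ℝ → ℝ → ℝ) (hn : IsRenewalMild q n₀ n)
    :
    (∀ᵐ s ∂(volume.restrict (Ioo (0:ℝ) sstar)),
      pstar * Real.exp (-(2 * pinf * sstar)) * g ≤ n (2 * sstar) s) ∧
    (g = 1 → ∀ᵐ s ∂(volume.restrict (Ioi (0:ℝ))),
      (pstar * sstar * Real.exp (-(2 * pinf * sstar))) *
        Set.indicator (Set.Icc (0:ℝ) sstar) (fun _ => 1 / sstar) s ≤ n (2 * sstar) s) := by
  have hnn := renewal_nonneg q pinf hpinf hq_meas hq_nonneg hq_upper n₀ hn₀_nonneg n hn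
  obtain ⟨hint, -, -, -, hrep⟩ := hn
  have hq_abs : ∀ s, |q s| ≤ pinf := fun s => abs_le.mpr ⟨by linarith [hq_nonneg s], hq_upper s⟩
  have hqI : ∀ a b : ℝ, IntervalIntegrable q volume a b := bddIntervalIntegrable hq_meas hq_abs
  have hg_nonneg : 0 ≤ g := by rw [hg]; exact integral_nonneg_of_ae hn₀_nonneg
  have ht : (0:ℝ) < 2 * sstar := by linarith
  -- main claim : lower bound for the nonlinear term N τ
  have hclaim : ∀ τ : ℝ, sstar < τ →
      pstar * Real.exp (-(pinf * τ)) * g ≤ ∫ u in Ioi (0:ℝ), q u * n τ u := by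
    intro τ hτ
    have hτ0 : (0:ℝ) < τ := lt_trans hsstar hτ
    have hn_nonneg : ∀ᵐ u ∂(volume.restrict (Ioi (0:ℝ))), 0 ≤ n τ u := hnn τ hτ0.le
    have hqn_int : IntegrableOn (fun u => q u * n τ u) (Ioi 0) volume :=
      Integrable.bdd_mul (hint τ hτ0.le) hq_meas.aestronglyMeasurable.restrict
        (c := pinf) (Filter.Eventually.of_forall fun u => by simpa [Real.norm_eq_abs] using hq_abs u)
    -- translation facts
    have hind : Integrable ((Ioi (0:ℝ)).indicator n₀) volume :=
      (integrable_indicator_iff measurableSet_Ioi).mpr hn₀_int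
    have hshift_eq : ∀ u : ℝ,
        (Ioi (0:ℝ)).indicator n₀ (u - τ) = (Ioi τ).indicator (fun u => n₀ (u - τ)) u := by
      intro u
      by_cases h : τ < u
      · rw [indicator_of_mem (show u - τ ∈ Ioi (0:ℝ) from sub_pos.mpr h),
          indicator_of_mem (show u ∈ Ioi τ from h)]
      · rw [indicator_of_notMem (show u - τ ∉ Ioi (0:ℝ) by
            simp only [mem_Ioi, not_lt]; linarith [not_lt.mp h]),
          indicator_of_notMem (show u ∉ Ioi τ from h)]
    have hn₀shift_int : IntegrableOn (fun u => n₀ (u - τ)) (Ioi τ) volume := by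
      have h1 := hind.comp_sub_right τ
      rw [show (fun u => (Ioi (0:ℝ)).indicator n₀ (u - τ))
          = (Ioi τ).indicator (fun u => n₀ (u - τ)) from funext hshift_eq] at h1
      exact (integrable_indicator_iff measurableSet_Ioi).mp h1
    have hshift_integral : (∫ u in Ioi τ, n₀ (u - τ)) = g := by
      rw [hg]
      calc (∫ u in Ioi τ, n₀ (u - τ))
          = ∫ u, (Ioi τ).indicator (fun u => n₀ (u - τ)) u :=
            (integral_indicator measurableSet_Ioi).symm
        _ = ∫ u, (Ioi (0:ℝ)).indicator n₀ (u - τ) := by simp_rw [← hshift_eq]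
        _ = ∫ u, (Ioi (0:ℝ)).indicator n₀ u := integral_sub_right_eq_self _ τ
        _ = ∫ u in Ioi (0:ℝ), n₀ u := integral_indicator measurableSet_Ioi
    have h₀s : ∀ᵐ u ∂(volume.restrict (Ioi τ)), 0 ≤ n₀ (u - τ) := by
      have h₀' : ∀ᵐ u ∂(volume : Measure ℝ), (u - τ) ∈ Ioi (0:ℝ) → 0 ≤ n₀ (u - τ) :=
        ((measurePreserving_sub_right volume τ).quasiMeasurePreserving).ae
          ((ae_restrict_iff' measurableSet_Ioi).mp hn₀_nonneg)
      filter_upwards [ae_restrict_of_ae h₀', ae_restrict_mem measurableSet_Ioi] with u h1 h2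
      exact h1 (mem_Ioi.mpr (sub_pos.mpr (mem_Ioi.mp h2)))
    -- the exponential weight
    have hqshiftI : ∀ u : ℝ, IntervalIntegrable (fun x => q (x + u - τ)) volume 0 τ := by
      intro u
      exact bddIntervalIntegrable (hq_meas.comp ((measurable_id.add_const u).sub_const τ))
        (fun x => hq_abs _) 0 τ
    have hG_ub : ∀ u : ℝ, (∫ x in (0:ℝ)..τ, q (x + u - τ)) ≤ pinf * τ := by
      intro u
      have h1 : (∫ x in (0:ℝ)..τ, q (x + u - τ)) ≤ ∫ x in (0:ℝ)..τ, pinf :=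
        intervalIntegral.integral_mono_on hτ0.le (hqshiftI u) intervalIntegrable_const
          (fun x _ => hq_upper _)
      simpa [intervalIntegral.integral_const, smul_eq_mul, mul_comm] using h1
    have hG_lb : ∀ u : ℝ, (0:ℝ) ≤ ∫ x in (0:ℝ)..τ, q (x + u - τ) := fun u =>
      intervalIntegral.integral_nonneg hτ0.le fun x _ => hq_nonneg _
    have hE1 : ∀ u : ℝ, Real.exp (-(∫ x in (0:ℝ)..τ, q (x + u - τ))) ≤ 1 := fun u => by
      rw [Real.exp_le_one_iff, neg_nonpos]; exact hG_lb u
    have hE_low : ∀ u : ℝ, Real.exp (-(pinf * τ)) ≤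
        Real.exp (-(∫ x in (0:ℝ)..τ, q (x + u - τ))) := fun u =>
      Real.exp_le_exp.mpr (neg_le_neg (hG_ub u))
    have hEcont : Continuous fun u : ℝ => Real.exp (-(∫ x in (0:ℝ)..τ, q (x + u - τ))) := by
      have hF : Continuous fun u : ℝ => (∫ x in (0:ℝ)..u, q x) :=
        intervalIntegral.continuous_primitive (fun a b => hqI a b) 0
      have hGeq : ∀ u : ℝ, (∫ x in (0:ℝ)..τ, q (x + u - τ))
          = (∫ x in (0:ℝ)..u, q x) - ∫ x in (0:ℝ)..(u - τ), q x := by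
        intro u
        have h1 : (∫ x in (0:ℝ)..τ, q (x + u - τ)) = ∫ x in (0:ℝ)..τ, q (x + (u - τ)) := by
          simp only [add_sub_assoc]
        rw [h1, intervalIntegral.integral_comp_add_right q (u - τ), zero_add,
          show τ + (u - τ) = u by ring]
        exact (intervalIntegral.integral_interval_sub_left (hqI 0 u) (hqI 0 (u - τ))).symm
      have h2 : (fun u : ℝ => Real.exp (-(∫ x in (0:ℝ)..τ, q (x + u - τ))))
          = fun u => Real.exp (-((∫ x in (0:ℝ)..u, q x) - ∫ x in (0:ℝ)..(u - τ), q x)) := by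
        funext u; rw [hGeq u]
      rw [h2]
      exact Real.continuous_exp.comp
        (Continuous.neg (hF.sub (hF.comp (continuous_id.sub continuous_const))))
    -- big integral
    have hbig_int : IntegrableOn
        (fun u => n₀ (u - τ) * Real.exp (-(∫ x in (0:ℝ)..τ, q (x + u - τ)))) (Ioi τ) volume := by
      apply Integrable.mono' hn₀shift_int.abs
        (hn₀shift_int.aestronglyMeasurable.mul hEcont.aestronglyMeasurable.restrict)
      refine Filter.Eventually.of_forall fun u => ?_
      simp only [Pi.mul_apply, Real.norm_eq_abs]
      rw [abs_mul, abs_of_nonneg (Real.exp_nonneg _)]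
      exact mul_le_of_le_one_right (abs_nonneg _) (hE1 u)
    have step3 : (∫ u in Ioi τ, n τ u)
        = ∫ u in Ioi τ, n₀ (u - τ) * Real.exp (-(∫ x in (0:ℝ)..τ, q (x + u - τ))) :=
      integral_congr_ae (hrep τ hτ0).1
    have step4 : Real.exp (-(pinf * τ)) * g ≤
        ∫ u in Ioi τ, n₀ (u - τ) * Real.exp (-(∫ x in (0:ℝ)..τ, q (x + u - τ))) := by
      calc Real.exp (-(pinf * τ)) * g
          = ∫ u in Ioi τ, n₀ (u - τ) * Real.exp (-(pinf * τ)) := by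
            rw [integral_mul_const, hshift_integral, mul_comm]
        _ ≤ ∫ u in Ioi τ, n₀ (u - τ) * Real.exp (-(∫ x in (0:ℝ)..τ, q (x + u - τ))) := by
            apply setIntegral_mono_ae_restrict (hn₀shift_int.mul_const _) hbig_int
            filter_upwards [h₀s] with u hu
            exact mul_le_mul_of_nonneg_left (hE_low u) hu
    have step2 : pstar * ∫ u in Ioi τ, n τ u ≤ ∫ u in Ioi τ, q u * n τ u := by
      rw [← integral_const_mul]
      apply setIntegral_mono_ae_restrict
        (((hint τ hτ0.le).mono_set (Ioi_subset_Ioi hτ0.le)).const_mul pstar)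
        (hqn_int.mono_set (Ioi_subset_Ioi hτ0.le))
      filter_upwards [ae_restrict_of_ae_restrict_of_subset (Ioi_subset_Ioi hτ0.le) hn_nonneg,
        ae_restrict_mem measurableSet_Ioi] with u h1 h2
      exact mul_le_mul_of_nonneg_right (hq_lower u (lt_trans hτ h2)) h1
    have step1 : (∫ u in Ioi τ, q u * n τ u) ≤ ∫ u in Ioi (0:ℝ), q u * n τ u := by
      apply setIntegral_mono_set hqn_int ?_ ((Ioi_subset_Ioi hτ0.le).eventuallyLE)
      filter_upwards [hn_nonneg] with u hu
      exact mul_nonneg (hq_nonneg u) hu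
    calc pstar * Real.exp (-(pinf * τ)) * g = pstar * (Real.exp (-(pinf * τ)) * g) := by ring
      _ ≤ pstar * ∫ u in Ioi τ, n τ u := by
          apply mul_le_mul_of_nonneg_left _ hpstar.le
          rw [step3]; exact step4
      _ ≤ ∫ u in Ioi τ, q u * n τ u := step2
      _ ≤ ∫ u in Ioi (0:ℝ), q u * n τ u := step1
  -- part 1
  have hpart1 : ∀ᵐ s ∂(volume.restrict (Ioo (0:ℝ) sstar)),
      pstar * Real.exp (-(2 * pinf * sstar)) * g ≤ n (2 * sstar) s := by
    have h2 := (hrep (2 * sstar) ht).2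
    have hsub : Ioo (0:ℝ) sstar ⊆ Ioo 0 (2 * sstar) := Ioo_subset_Ioo le_rfl (by linarith)
    filter_upwards [ae_restrict_of_ae_restrict_of_subset hsub h2,
      ae_restrict_mem measurableSet_Ioo] with s hs hmem
    rw [hs]
    have hτ1 : sstar < 2 * sstar - s := by linarith [hmem.2]
    have hNτ := hclaim (2 * sstar - s) hτ1
    have hNτ0 : 0 ≤ ∫ u in Ioi (0:ℝ), q u * n (2 * sstar - s) u :=
      le_trans (by positivity) hNτ
    have hE : Real.exp (-(pinf * s)) ≤ Real.exp (-(∫ x in (0:ℝ)..s, q x)) := by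
      apply Real.exp_le_exp.mpr
      apply neg_le_neg
      have h1 : (∫ x in (0:ℝ)..s, q x) ≤ ∫ x in (0:ℝ)..s, pinf :=
        intervalIntegral.integral_mono_on hmem.1.le (hqI 0 s) intervalIntegrable_const
          (fun x _ => hq_upper x)
      simpa [intervalIntegral.integral_const, smul_eq_mul, mul_comm] using h1
    have hexp : Real.exp (-(pinf * (2 * sstar - s))) * Real.exp (-(pinf * s))
        = Real.exp (-(2 * pinf * sstar)) := by
      rw [← Real.exp_add]; congr 1; ring
    calc pstar * Real.exp (-(2 * pinf * sstar)) * g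
        = (pstar * Real.exp (-(pinf * (2 * sstar - s))) * g) * Real.exp (-(pinf * s)) := by
          rw [← hexp]; ring
      _ ≤ (∫ u in Ioi (0:ℝ), q u * n (2 * sstar - s) u) *
            Real.exp (-(∫ x in (0:ℝ)..s, q x)) :=
          mul_le_mul hNτ hE (Real.exp_nonneg _) hNτ0
  refine ⟨hpart1, fun hg1 => ?_⟩
  -- part 2
  have h1 : ∀ᵐ s ∂(volume : Measure ℝ), s ∈ Ioo (0:ℝ) sstar →
      pstar * Real.exp (-(2 * pinf * sstar)) * g ≤ n (2 * sstar) s :=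
    (ae_restrict_iff' measurableSet_Ioo).mp hpart1
  have h2 : ∀ᵐ s ∂(volume : Measure ℝ), s ∈ Ioi (0:ℝ) → 0 ≤ n (2 * sstar) s :=
    (ae_restrict_iff' measurableSet_Ioi).mp (hnn (2 * sstar) ht.le)
  have h3 : ∀ᵐ s ∂(volume : Measure ℝ), s ≠ sstar := by
    rw [ae_iff]
    simp only [not_not, setOf_eq_eq_singleton]
    exact measure_singleton sstar
  filter_upwards [ae_restrict_of_ae h1, ae_restrict_of_ae h2, ae_restrict_of_ae h3,
    ae_restrict_mem measurableSet_Ioi] with s hs1 hs2 hs3 hs4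
  by_cases hcase : s < sstar
  · rw [indicator_of_mem (show s ∈ Icc (0:ℝ) sstar from ⟨le_of_lt hs4, le_of_lt hcase⟩)]
    have hval : pstar * sstar * Real.exp (-(2 * pinf * sstar)) * (1 / sstar)
        = pstar * Real.exp (-(2 * pinf * sstar)) := by
      field_simp
    rw [hval]
    have := hs1 ⟨hs4, hcase⟩
    rwa [hg1, mul_one] at this
  · have : s ∉ Icc (0:ℝ) sstar := by
      intro hmem
      exact hs3 (le_antisymm hmem.2 (not_lt.mp hcase))
    rw [indicator_of_notMem this, mul_zero]
    exact hs2 hs4
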